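/- For the two-step process Choi state Υ = |0⟩⟨0|_B ⊗ (1/2)(|0⟩⟨0|_C ⊗ Φ_{AD} + |1⟩⟨1|_C ⊗ (𝕀/2)_A ⊗ (𝕀/2)_D) on four qubits, the relative entropy to the product of its marginals equals 1: S(Υ ‖ Υ_A ⊗ Υ_B ⊗ Υ_C ⊗ Υ_D) = 1, where Υ_A ⊗ Υ_B ⊗ Υ_C ⊗ Υ_D = (𝕀/2) ⊗ |0⟩⟨0| ⊗ (𝕀/2) ⊗ (𝕀/2). -/

import Mathlib

open Matrix Kronecker
open scoped ComplexOrder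

noncomputable section

/-- Base-2 matrix logarithm of a Hermitian matrix, via the spectral theorem
(with the convention `log 0 = 0`); `0` on non-Hermitian matrices. -/
def mlog2 {n : Type*} [Fintype n] [DecidableEq n] (A : Matrix n n ℂ) : Matrix n n ℂ :=
  if h : A.IsHermitian then
    (h.eigenvectorUnitary : Matrix n n ℂ) *
      Matrix.diagonal (fun i => (Real.logb 2 (h.eigenvalues i) : ℂ)) *
      (star h.eigenvectorUnitary : Matrix n n ℂ)
  else 0

/-- Quantum relative entropy `S(ρ‖σ) = Tr[ρ (log₂ ρ − log₂ σ)]`. -/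
def relEnt {n : Type*} [Fintype n] [DecidableEq n] (ρ σ : Matrix n n ℂ) : ℝ :=
  (Matrix.trace (ρ * (mlog2 ρ - mlog2 σ))).re

/-- Von Neumann entropy `H(ρ) = −Tr[ρ log₂ ρ]`. -/
def vnEnt {n : Type*} [Fintype n] [DecidableEq n] (ρ : Matrix n n ℂ) : ℝ :=
  -(Matrix.trace (ρ * mlog2 ρ)).re

/-- A density matrix: positive semidefinite with unit trace. -/
def IsDensity {n : Type*} [Fintype n] (ρ : Matrix n n ℂ) : Prop :=
  ρ.PosSemidef ∧ ρ.trace = 1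

/-- Partial trace over the second (B) factor. -/
def ptraceB {m n : Type*} [Fintype n] (M : Matrix (m × n) (m × n) ℂ) : Matrix m m ℂ :=
  Matrix.of fun i j => ∑ k, M (i, k) (j, k)

/-- Partial trace over the first (A) factor. -/
def ptraceA {m n : Type*} [Fintype m] (M : Matrix (m × n) (m × n) ℂ) : Matrix n n ℂ :=
  Matrix.of fun a b => ∑ k, M (k, a) (k, b)

/-- The Choi state `(id ⊗ M)(Φ)` of a map `M : M_d(ℂ) → M_{d'}(ℂ)`, where
`Φ = (1/d) ∑_{i,j} |ii⟩⟨jj|` is the maximally entangled state. -/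
def ChoiOf {d d' : ℕ} (M : Matrix (Fin d) (Fin d) ℂ → Matrix (Fin d') (Fin d') ℂ) :
    Matrix (Fin d × Fin d') (Fin d × Fin d') ℂ :=
  Matrix.of fun p q =>
    ((d : ℂ))⁻¹ * M (Matrix.single p.1 q.1 1) p.2 q.2

/-- Complete positivity of a linear map on matrices: every finite ancilla
extension `id_k ⊗ M` maps positive semidefinite matrices to positive
semidefinite matrices. -/
def IsCompletelyPositive {n m : Type*} [Fintype n] [DecidableEq n] [Fintype m] [DecidableEq m]
    (M : Matrix n n ℂ →ₗ[ℂ] Matrix m m ℂ) : Prop :=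
  ∀ (k : ℕ) (X : Matrix (Fin k × n) (Fin k × n) ℂ), X.PosSemidef →
    (Matrix.of fun (p q : Fin k × m) =>
      M (Matrix.of fun a b => X (p.1, a) (q.1, b)) p.2 q.2).PosSemidef

/-- The classical-quantum state `∑_x p_x |x⟩⟨x| ⊗ ρ_x`. -/
def cqState {ι m : Type*} [DecidableEq ι] (p : ι → ℝ) (ρ : ι → Matrix m m ℂ) :
    Matrix (ι × m) (ι × m) ℂ :=
  Matrix.of fun x y => if x.1 = y.1 then (p x.1 : ℂ) * ρ x.1 x.2 y.2 else 0

/-- The maximally entangled two-qubit state `Φ = (1/2) ∑_{i,j} |ii⟩⟨jj|`. -/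
def Phi2 : Matrix (Fin 2 × Fin 2) (Fin 2 × Fin 2) ℂ :=
  Matrix.of fun p q => if p.1 = p.2 ∧ q.1 = q.2 then (1 / 2 : ℂ) else 0

end

noncomputable section
/-- The four-qubit (A,B,C,D) two-step process Choi state
`Υ = |0⟩⟨0|_B ⊗ (1/2)(|0⟩⟨0|_C ⊗ Φ_{AD} + |1⟩⟨1|_C ⊗ 𝕀/2 ⊗ 𝕀/2)`. -/
def Yproc : Matrix (Fin 2 × Fin 2 × Fin 2 × Fin 2) (Fin 2 × Fin 2 × Fin 2 × Fin 2) ℂ :=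
  Matrix.of fun x y =>
    (if x.2.1 = 0 ∧ y.2.1 = 0 then 1 else 0) *
      ((1 / 2 : ℂ) *
        ((if x.2.2.1 = 0 ∧ y.2.2.1 = 0 then Phi2 (x.1, x.2.2.2) (y.1, y.2.2.2) else 0) +
          (if x.2.2.1 = 1 ∧ y.2.2.1 = 1 then
            (if x.1 = y.1 ∧ x.2.2.2 = y.2.2.2 then (1 / 4 : ℂ) else 0) else 0)))

def margA (Υ : Matrix (Fin 2 × Fin 2 × Fin 2 × Fin 2) (Fin 2 × Fin 2 × Fin 2 × Fin 2) ℂ) :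
    Matrix (Fin 2) (Fin 2) ℂ :=
  Matrix.of fun a a' => ∑ b : Fin 2, ∑ c : Fin 2, ∑ d : Fin 2,
    Υ (a, b, c, d) (a', b, c, d)

def margB (Υ : Matrix (Fin 2 × Fin 2 × Fin 2 × Fin 2) (Fin 2 × Fin 2 × Fin 2 × Fin 2) ℂ) :
    Matrix (Fin 2) (Fin 2) ℂ :=
  Matrix.of fun b b' => ∑ a : Fin 2, ∑ c : Fin 2, ∑ d : Fin 2,
    Υ (a, b, c, d) (a, b', c, d)

def margC (Υ : Matrix (Fin 2 × Fin 2 × Fin 2 × Fin 2) (Fin 2 × Fin 2 × Fin 2 × Fin 2) ℂ) :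
    Matrix (Fin 2) (Fin 2) ℂ :=
  Matrix.of fun c c' => ∑ a : Fin 2, ∑ b : Fin 2, ∑ d : Fin 2,
    Υ (a, b, c, d) (a, b, c', d)

def margD (Υ : Matrix (Fin 2 × Fin 2 × Fin 2 × Fin 2) (Fin 2 × Fin 2 × Fin 2 × Fin 2) ℂ) :
    Matrix (Fin 2) (Fin 2) ℂ :=
  Matrix.of fun d d' => ∑ a : Fin 2, ∑ b : Fin 2, ∑ c : Fin 2,
    Υ (a, b, c, d) (a, b, c, d')

/-- The product of the four single-site marginals `Υ_A ⊗ Υ_B ⊗ Υ_C ⊗ Υ_D`. -/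
def prodMarg (Υ : Matrix (Fin 2 × Fin 2 × Fin 2 × Fin 2) (Fin 2 × Fin 2 × Fin 2 × Fin 2) ℂ) :
    Matrix (Fin 2 × Fin 2 × Fin 2 × Fin 2) (Fin 2 × Fin 2 × Fin 2 × Fin 2) ℂ :=
  Matrix.of fun x y =>
    margA Υ x.1 y.1 * margB Υ x.2.1 y.2.1 * margC Υ x.2.2.1 y.2.2.1 *
      margD Υ x.2.2.2 y.2.2.2
end


/-! ### Auxiliary machinery for the proof -/

noncomputable section AuxProof

def Qm : Matrix (Fin 2 × Fin 2 × Fin 2 × Fin 2) (Fin 2 × Fin 2 × Fin 2 × Fin 2) ℂ :=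
  Matrix.of fun x y =>
    if x.2.1 = 0 ∧ y.2.1 = 0 ∧ x.2.2.1 = 0 ∧ y.2.2.1 = 0 ∧ x.1 = x.2.2.2 ∧ y.1 = y.2.2.2
      then (1/2 : ℂ) else 0

def Pm : Matrix (Fin 2 × Fin 2 × Fin 2 × Fin 2) (Fin 2 × Fin 2 × Fin 2 × Fin 2) ℂ :=
  Matrix.of fun x y =>
    if x.2.1 = 0 ∧ y.2.1 = 0 ∧ x.2.2.1 = 1 ∧ y.2.2.1 = 1 ∧ x.1 = y.1 ∧ x.2.2.2 = y.2.2.2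
      then (1 : ℂ) else 0

def Rm : Matrix (Fin 2 × Fin 2 × Fin 2 × Fin 2) (Fin 2 × Fin 2 × Fin 2 × Fin 2) ℂ :=
  Matrix.of fun x y =>
    if x.1 = y.1 ∧ x.2.1 = 0 ∧ y.2.1 = 0 ∧ x.2.2.1 = y.2.2.1 ∧ x.2.2.2 = y.2.2.2
      then (1 : ℂ) else 0

set_option maxHeartbeats 1000000

lemma hY_decomp : Yproc = (1/2 : ℂ) • Qm + (1/8 : ℂ) • Pm := by
  ext ⟨a,b,c,d⟩ ⟨a',b',c',d'⟩
  simp only [Yproc, Qm, Pm, Phi2, Matrix.of_apply, Matrix.add_apply, Matrix.smul_apply,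
    smul_eq_mul, mul_ite, ite_mul, mul_zero, zero_mul, mul_one, one_mul]
  norm_num
  try (split_ifs <;> try norm_num)
  all_goals exfalso
  all_goals (try simp only [Fin.ext_iff, Fin.val_zero, Fin.val_one] at *)
  all_goals omega

lemma hQQ : Qm * Qm = Qm := by
  ext ⟨a,b,c,d⟩ ⟨a',b',c',d'⟩
  simp only [Matrix.mul_apply, Fintype.sum_prod_type, Fin.sum_univ_two, Qm, Matrix.of_apply,
    mul_ite, ite_mul, mul_zero, zero_mul, mul_one, one_mul]
  norm_num
  try (split_ifs <;> try norm_num)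
  all_goals exfalso
  all_goals (try simp only [Fin.ext_iff, Fin.val_zero, Fin.val_one] at *)
  all_goals omega

lemma hPP : Pm * Pm = Pm := by
  ext ⟨a,b,c,d⟩ ⟨a',b',c',d'⟩
  simp only [Matrix.mul_apply, Fintype.sum_prod_type, Fin.sum_univ_two, Pm, Matrix.of_apply,
    mul_ite, ite_mul, mul_zero, zero_mul, mul_one, one_mul]
  norm_num
  try (split_ifs <;> try norm_num)
  all_goals exfalso
  all_goals (try simp only [Fin.ext_iff, Fin.val_zero, Fin.val_one] at *)
  all_goals omega

lemma hQP : Qm * Pm = 0 := by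
  ext ⟨a,b,c,d⟩ ⟨a',b',c',d'⟩
  simp only [Matrix.mul_apply, Fintype.sum_prod_type, Fin.sum_univ_two, Qm, Pm, Matrix.of_apply,
    Matrix.zero_apply, mul_ite, ite_mul, mul_zero, zero_mul, mul_one, one_mul]
  norm_num
  try (split_ifs <;> try norm_num)
  all_goals exfalso
  all_goals (try simp only [Fin.ext_iff, Fin.val_zero, Fin.val_one] at *)
  all_goals omega

lemma hPQ : Pm * Qm = 0 := by
  ext ⟨a,b,c,d⟩ ⟨a',b',c',d'⟩
  simp only [Matrix.mul_apply, Fintype.sum_prod_type, Fin.sum_univ_two, Qm, Pm, Matrix.of_apply,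
    Matrix.zero_apply, mul_ite, ite_mul, mul_zero, zero_mul, mul_one, one_mul]
  norm_num
  try (split_ifs <;> try norm_num)
  all_goals exfalso
  all_goals (try simp only [Fin.ext_iff, Fin.val_zero, Fin.val_one] at *)
  all_goals omega

lemma mul_Rm_single (M : Matrix (Fin 2 × Fin 2 × Fin 2 × Fin 2) (Fin 2 × Fin 2 × Fin 2 × Fin 2) ℂ)
    (hM : ∀ x a b c d, b ≠ 0 → M x (a,b,c,d) = 0) :
    M * Rm = M := by
  ext x ⟨a',b',c',d'⟩
  rw [Matrix.mul_apply, Finset.sum_eq_single ((a',0,c',d') : Fin 2 × Fin 2 × Fin 2 × Fin 2)]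
  · by_cases hb : b' = 0
    · subst hb
      have h1 : Rm (a',0,c',d') (a',0,c',d') = 1 := by simp [Rm]
      rw [h1, mul_one]
    · have h1 : Rm (a',0,c',d') (a',b',c',d') = 0 := by
        simp only [Rm, Matrix.of_apply]
        rw [if_neg]
        rintro ⟨-,-,h2,-,-⟩
        exact hb h2
      rw [h1, mul_zero, hM x a' b' c' d' hb]
  · rintro ⟨za,zb,zc,zd⟩ - hz
    have h1 : Rm (za,zb,zc,zd) (a',b',c',d') = 0 := by
      simp only [Rm, Matrix.of_apply]
      rw [if_neg]
      rintro ⟨h1,h2,-,h4,h5⟩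
      exact hz (by simp_all)
    rw [h1, mul_zero]
  · intro h
    exact absurd (Finset.mem_univ _) h

lemma hQ_supp : ∀ x a b c d, b ≠ (0 : Fin 2) → Qm x (a,b,c,d) = 0 := by
  intro x a b c d hb
  simp only [Qm, Matrix.of_apply]
  rw [if_neg]
  rintro ⟨-,h2,-,-,-,-⟩
  exact hb h2

lemma hP_supp : ∀ x a b c d, b ≠ (0 : Fin 2) → Pm x (a,b,c,d) = 0 := by
  intro x a b c d hb
  simp only [Pm, Matrix.of_apply]
  rw [if_neg]
  rintro ⟨-,h2,-,-,-,-⟩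
  exact hb h2

lemma hR_supp : ∀ x a b c d, b ≠ (0 : Fin 2) → Rm x (a,b,c,d) = 0 := by
  intro x a b c d hb
  simp only [Rm, Matrix.of_apply]
  rw [if_neg]
  rintro ⟨-,-,h3,-,-⟩
  exact hb h3

lemma hRR : Rm * Rm = Rm := mul_Rm_single Rm hR_supp

lemma hQR : Qm * Rm = Qm := mul_Rm_single Qm hQ_supp

lemma hPR : Pm * Rm = Pm := mul_Rm_single Pm hP_supp

lemma trQ : Qm.trace = 1 := by
  simp only [Matrix.trace, Matrix.diag, Fintype.sum_prod_type, Fin.sum_univ_two, Qm,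
    Matrix.of_apply]
  norm_num

lemma hQherm : Qm.IsHermitian := by
  rw [Matrix.IsHermitian]
  ext ⟨a,b,c,d⟩ ⟨a',b',c',d'⟩
  simp only [Matrix.conjTranspose_apply, Qm, Matrix.of_apply]
  split_ifs <;> try norm_num
  all_goals exfalso
  all_goals (try simp only [Fin.ext_iff, Fin.val_zero, Fin.val_one] at *)
  all_goals omega

lemma hPherm : Pm.IsHermitian := by
  rw [Matrix.IsHermitian]
  ext ⟨a,b,c,d⟩ ⟨a',b',c',d'⟩
  simp only [Matrix.conjTranspose_apply, Pm, Matrix.of_apply]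
  split_ifs <;> try norm_num
  all_goals exfalso
  all_goals (try simp only [Fin.ext_iff, Fin.val_zero, Fin.val_one] at *)
  all_goals omega

lemma hRherm : Rm.IsHermitian := by
  rw [Matrix.IsHermitian]
  ext ⟨a,b,c,d⟩ ⟨a',b',c',d'⟩
  simp only [Matrix.conjTranspose_apply, Rm, Matrix.of_apply]
  split_ifs <;> try norm_num
  all_goals exfalso
  all_goals (try simp only [Fin.ext_iff, Fin.val_zero, Fin.val_one] at *)
  all_goals omega

lemma hYherm : Yproc.IsHermitian := by
  rw [Matrix.IsHermitian, hY_decomp, Matrix.conjTranspose_add, Matrix.conjTranspose_smul,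
    Matrix.conjTranspose_smul, hQherm.eq, hPherm.eq]
  norm_num

lemma hprodMarg : prodMarg Yproc = (1/8 : ℂ) • Rm := by
  have hA : margA Yproc = Matrix.of fun a a' => if a = a' then (1/2 : ℂ) else 0 := by
    ext a a'
    simp only [margA, Yproc, Phi2, Matrix.of_apply, Fin.sum_univ_two]
    fin_cases a <;> fin_cases a' <;> norm_num
  have hB : margB Yproc = Matrix.of fun b b' =>
      if b = 0 ∧ b' = 0 then (1 : ℂ) else 0 := by
    ext b b'
    simp only [margB, Yproc, Phi2, Matrix.of_apply, Fin.sum_univ_two]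
    fin_cases b <;> fin_cases b' <;> norm_num
  have hC : margC Yproc = Matrix.of fun c c' => if c = c' then (1/2 : ℂ) else 0 := by
    ext c c'
    simp only [margC, Yproc, Phi2, Matrix.of_apply, Fin.sum_univ_two]
    fin_cases c <;> fin_cases c' <;> norm_num
  have hD : margD Yproc = Matrix.of fun d d' => if d = d' then (1/2 : ℂ) else 0 := by
    ext d d'
    simp only [margD, Yproc, Phi2, Matrix.of_apply, Fin.sum_univ_two]
    fin_cases d <;> fin_cases d' <;> norm_num
  ext ⟨a,b,c,d⟩ ⟨a',b',c',d'⟩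
  simp only [prodMarg, hA, hB, hC, hD, Rm, Matrix.of_apply, Matrix.smul_apply, smul_eq_mul,
    mul_ite, ite_mul, mul_zero, zero_mul, mul_one, one_mul]
  try (split_ifs <;> try norm_num)
  all_goals exfalso
  all_goals (try simp only [Fin.ext_iff, Fin.val_zero, Fin.val_one] at *)
  all_goals omega

lemma hYsq : Yproc * Yproc = (1/4 : ℂ) • Qm + (1/64 : ℂ) • Pm := by
  rw [hY_decomp]
  simp only [Matrix.add_mul, Matrix.mul_add, Matrix.smul_mul, Matrix.mul_smul,
    hQQ, hPP, hQP, hPQ, smul_smul, smul_zero]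
  module

lemma hYcub : Yproc * Yproc * Yproc
    = ((5/8 : ℝ) : ℂ) • (Yproc * Yproc) + ((-(1/16) : ℝ) : ℂ) • Yproc := by
  rw [hYsq, hY_decomp]
  simp only [Matrix.add_mul, Matrix.mul_add, Matrix.smul_mul, Matrix.mul_smul,
    hQQ, hPP, hQP, hPQ, smul_smul, smul_zero]
  push_cast
  module

lemma logb_half : Real.logb 2 (1/2) = -1 := by
  rw [show (1/2:ℝ) = 2⁻¹ by norm_num, Real.logb_inv, Real.logb_self_eq_one] <;> norm_num

lemma logb_eighth : Real.logb 2 (1/8) = -3 := by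
  rw [show (1/8:ℝ) = ((2:ℝ)^(3:ℕ))⁻¹ by norm_num, Real.logb_inv, Real.logb_pow,
    Real.logb_self_eq_one] <;> norm_num

lemma eigen_cubic {n : Type*} [Fintype n] [DecidableEq n] {A : Matrix n n ℂ}
    (hA : A.IsHermitian) (c d : ℝ)
    (h : A * A * A = (c:ℂ) • (A * A) + (d:ℂ) • A) (i : n) :
    hA.eigenvalues i * (hA.eigenvalues i * hA.eigenvalues i) =
      c * (hA.eigenvalues i * hA.eigenvalues i) + d * hA.eigenvalues i := by
  have hsm : ∀ (r : ℝ) (w : n → ℂ), r • w = (r : ℂ) • w := fun r w => by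
    ext j; simp [Complex.real_smul]
  have hv := hA.mulVec_eigenvectorBasis i
  set t := hA.eigenvalues i with htdef
  set v : n → ℂ := ⇑(hA.eigenvectorBasis i) with hvdef
  rw [hsm] at hv
  have hv0 : v ≠ 0 := by
    have hne := hA.eigenvectorBasis.orthonormal.ne_zero i
    intro hc
    exact hne (by ext j; exact congrFun hc j)
  have h2 : (A * A) *ᵥ v = ((t * t : ℝ) : ℂ) • v := by
    rw [← Matrix.mulVec_mulVec, hv, Matrix.mulVec_smul, hv, smul_smul]
    push_cast; ring_nf
  have h3 : (A * A * A) *ᵥ v = ((t * (t * t) : ℝ) : ℂ) • v := by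
    rw [← Matrix.mulVec_mulVec, hv, Matrix.mulVec_smul, h2, smul_smul]
    push_cast; ring_nf
  rw [h, Matrix.add_mulVec, Matrix.smul_mulVec, Matrix.smul_mulVec, h2, hv,
    smul_smul, smul_smul] at h3
  have hz : (((t * (t * t) : ℝ) : ℂ) - ((c : ℂ) * ((t*t:ℝ):ℂ) + (d:ℂ) * (t:ℂ))) • v = 0 := by
    rw [sub_smul, add_smul, h3]; abel
  rcases smul_eq_zero.mp hz with h' | h'
  · have h'' : ((t * (t * t) - (c * (t*t) + d * t) : ℝ) : ℂ) = 0 := by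
      push_cast; push_cast at h'; linear_combination h'
    have := Complex.ofReal_eq_zero.mp h''
    linarith
  · exact absurd h' hv0

lemma mlog2_eq_poly {n : Type*} [Fintype n] [DecidableEq n] {A : Matrix n n ℂ}
    (hA : A.IsHermitian) (a b : ℝ)
    (hroot : ∀ i, Real.logb 2 (hA.eigenvalues i)
      = a * hA.eigenvalues i + b * (hA.eigenvalues i * hA.eigenvalues i)) :
    mlog2 A = (a : ℂ) • A + (b : ℂ) • (A * A) := by
  rw [mlog2, dif_pos hA]
  set U : Matrix n n ℂ := (hA.eigenvectorUnitary : Matrix n n ℂ) with hUdef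
  have hUU : star U * U = 1 := Unitary.coe_star_mul_self _
  set D : Matrix n n ℂ := Matrix.diagonal (RCLike.ofReal ∘ hA.eigenvalues) with hDdef
  have hspec : A = U * D * star U := hA.spectral_theorem
  have hAA : A * A = U * (D * D) * star U := by
    rw [hspec, show U * D * star U * (U * D * star U) = U * D * (star U * U) * (D * star U) by
      noncomm_ring, hUU, Matrix.mul_one]
    noncomm_ring
  have hdiag : Matrix.diagonal (fun i => (Real.logb 2 (hA.eigenvalues i) : ℂ))
      = (a : ℂ) • D + (b : ℂ) • (D * D) := by
    ext i j
    by_cases h : i = j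
    · subst h
      simp only [hDdef, Matrix.diagonal_mul_diagonal, Matrix.add_apply, Matrix.smul_apply,
        Matrix.diagonal_apply_eq, Function.comp_apply, smul_eq_mul, RCLike.ofReal_alg]
      push_cast [Complex.real_smul, hroot i]
      ring
    · simp [hDdef, Matrix.diagonal_apply_ne _ h, Matrix.diagonal_mul_diagonal, h]
  rw [hdiag, hAA, hspec]
  simp only [Matrix.mul_add, Matrix.add_mul, Matrix.mul_smul, Matrix.smul_mul]

lemma mlog2_Yproc : mlog2 Yproc = (-1 : ℂ) • Qm + (-3 : ℂ) • Pm := by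
  have hroot : ∀ i, Real.logb 2 (hYherm.eigenvalues i)
      = (-94/3) * hYherm.eigenvalues i
        + (176/3) * (hYherm.eigenvalues i * hYherm.eigenvalues i) := by
    intro i
    have hc := eigen_cubic hYherm (5/8) (-(1/16)) hYcub i
    set t := hYherm.eigenvalues i with ht
    have hfac : t * (t - 1/2) * (t - 1/8) = 0 := by linear_combination hc
    rcases mul_eq_zero.mp hfac with h | h
    · rcases mul_eq_zero.mp h with h | h
      · rw [h]; simp [Real.logb_zero]
      · have ht2 : t = 1/2 := by linarith
        rw [ht2, logb_half]; norm_num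
    · have ht8 : t = 1/8 := by linarith
      rw [ht8, logb_eighth]; norm_num
  rw [mlog2_eq_poly hYherm (-94/3) (176/3) hroot, hYsq, hY_decomp]
  push_cast
  module

lemma mlog2_prodMarg : mlog2 (prodMarg Yproc) = (-3 : ℂ) • Rm := by
  have hherm : (prodMarg Yproc).IsHermitian := by
    rw [Matrix.IsHermitian, hprodMarg, Matrix.conjTranspose_smul, hRherm.eq]
    norm_num
  have hcub : prodMarg Yproc * prodMarg Yproc * prodMarg Yproc
      = ((1/8 : ℝ) : ℂ) • (prodMarg Yproc * prodMarg Yproc)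
        + ((0 : ℝ) : ℂ) • prodMarg Yproc := by
    rw [hprodMarg]
    simp only [Matrix.smul_mul, Matrix.mul_smul, hRR, smul_smul]
    push_cast
    module
  have hroot : ∀ i, Real.logb 2 (hherm.eigenvalues i)
      = (-24) * hherm.eigenvalues i + 0 * (hherm.eigenvalues i * hherm.eigenvalues i) := by
    intro i
    have hc := eigen_cubic hherm (1/8) 0 hcub i
    set t := hherm.eigenvalues i with ht
    have hfac : t * t * (t - 1/8) = 0 := by linear_combination hc
    rcases mul_eq_zero.mp hfac with h | h
    · rcases mul_eq_zero.mp h with h | h <;> (rw [h]; simp [Real.logb_zero])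
    · have ht8 : t = 1/8 := by linarith
      rw [ht8, logb_eighth]; norm_num
  rw [mlog2_eq_poly hherm (-24) 0 hroot, hprodMarg]
  simp only [Matrix.smul_mul, Matrix.mul_smul, hRR, smul_smul]
  push_cast
  module

end AuxProof
theorem total_correlations_Yproc :
    prodMarg Yproc = (Matrix.of fun x y : Fin 2 × Fin 2 × Fin 2 × Fin 2 =>
      if x.1 = y.1 ∧ x.2.1 = 0 ∧ y.2.1 = 0 ∧ x.2.2.1 = y.2.2.1 ∧ x.2.2.2 = y.2.2.2
        then (1 / 8 : ℂ) else 0) ∧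
    relEnt Yproc (prodMarg Yproc) = 1 := by
  constructor
  · rw [hprodMarg]
    ext ⟨a,b,c,d⟩ ⟨a',b',c',d'⟩
    simp only [Rm, Matrix.of_apply, Matrix.smul_apply, smul_eq_mul,
      mul_ite, ite_mul, mul_zero, zero_mul, mul_one, one_mul]
    try (split_ifs <;> try norm_num)
    all_goals exfalso
    all_goals (try simp only [Fin.ext_iff, Fin.val_zero, Fin.val_one] at *)
    all_goals omega
  · have hexp : Yproc * ((-1 : ℂ) • Qm + (-3 : ℂ) • Pm - (-3 : ℂ) • Rm) = Qm := by
      rw [hY_decomp]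
      simp only [Matrix.mul_sub, Matrix.mul_add, Matrix.add_mul, Matrix.smul_mul,
        Matrix.mul_smul, hQQ, hPP, hQP, hPQ, hQR, hPR, smul_smul, smul_zero]
      module
    have hre : relEnt Yproc (prodMarg Yproc)
        = (Matrix.trace (Yproc * (mlog2 Yproc - mlog2 (prodMarg Yproc)))).re := rfl
    rw [hre, mlog2_Yproc, mlog2_prodMarg, hexp, trQ]
    exact Complex.one_re
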